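/- Let p be a prime with p ≠ 2 and p ≠ 3, let w ∈ GF(2^p) \ {0,1}, and set A = {0, 1, w, w+1}. If a ∈ GF(2^p) \ {0} and l is an integer with 0 ≤ l < p such that the map x ↦ a·x^(2^l) maps A onto A, then a = 1 and l = 0 (i.e. the map is the identity on GF(2^p)). -/
import Mathlib


open scoped Classical

noncomputable section

namespace MaxArc

variable (F : Type) [Field F] [Fintype F]

/-- The absolute trace map of `GF(2^h)` over `GF(2)`, valued in the field itself
(the prime subfield is identified with `{0,1}`). -/
def tr (h : ℕ) (x : F) : F := ∑ i ∈ Finset.range h, x ^ 2 ^ i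

/-- The points of `PG(2,q)`. -/
abbrev Pt := Projectivization F (Fin 3 → F)

/-- The conic `F_{α,β,λ} = {(x,y,z) : α x² + x y + β y² + λ z² = 0}` of `PG(2,q)`.
(The defining equation is homogeneous, so evaluating at the chosen representative
is independent of the choice.) -/
def conicSet (a b l : F) : Set (Pt F) :=
  {P | a * P.rep 0 ^ 2 + P.rep 0 * P.rep 1 + b * P.rep 1 ^ 2 + l * P.rep 2 ^ 2 = 0}

/-- The lines of `PG(2,q)`: zero sets of nonzero linear forms. -/
def IsLine (L : Set (Pt F)) : Prop :=
  ∃ u v w : F, ¬(u = 0 ∧ v = 0 ∧ w = 0) ∧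
    L = {P | u * P.rep 0 + v * P.rep 1 + w * P.rep 2 = 0}

/-- A maximal arc of degree `d`: a nonempty proper set of points met by every line
in exactly `0` or `d` points. -/
def IsMaximalArc (K : Set (Pt F)) (d : ℕ) : Prop :=
  K.Nonempty ∧ K ≠ Set.univ ∧
    ∀ L : Set (Pt F), IsLine F L → (K ∩ L).ncard = 0 ∨ (K ∩ L).ncard = d

/-- The point `(0,0,1)` of `PG(2,q)`. -/
def pt001 : Pt F := Projectivization.mk F ![0, 0, 1] (by
  intro hc
  have h2 := congrFun hc 2
  simp at h2)

/-- A collineation of `PG(2,q)`: the permutation of the point set induced by an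
invertible `σ`-semilinear map of `F³` (written as an invertible matrix composed
with a field automorphism `σ`). -/
def IsCollineation (g : Pt F → Pt F) : Prop :=
  ∃ σ : F ≃+* F, ∃ M : Matrix (Fin 3) (Fin 3) F, IsUnit M.det ∧
    ∀ (v : Fin 3 → F) (hv : v ≠ 0) (hv' : M.mulVec (fun i => σ (v i)) ≠ 0),
      g (Projectivization.mk F v hv) = Projectivization.mk F (M.mulVec (fun i => σ (v i))) hv'

/-- A closed set of conics `{F_{a(λ), b(λ), λ} : λ ∈ Λ}` in `PG(2,q)`, `q = 2^h`. -/
def IsClosedConicSet (h : ℕ) (Λ : Finset F) (a b : F → F) : Prop :=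
  (0 : F) ∉ Λ ∧ (∀ l ∈ Λ, tr F h (a l * b l) = 1) ∧
    ∀ l ∈ Λ, ∀ l' ∈ Λ, l ≠ l' →
      l + l' ∈ Λ ∧ a (l + l') = (a l * l + a l' * l') / (l + l') ∧
        b (l + l') = (b l * l + b l' * l') / (l + l')

/-- The point set of a (Mathon) arc obtained from a family of conics: the union of
the conics together with the common nucleus `(0,0,1)`. -/
def mathonSet (Λ : Finset F) (a b : F → F) : Set (Pt F) :=
  {pt001 F} ∪ ⋃ l ∈ Λ, conicSet F (a l) (b l) l

/-- The Denniston point set determined by `α` and a set `A ⊆ GF(q)`. -/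
def dennistonSet (a : F) (A : Set F) : Set (Pt F) :=
  {pt001 F} ∪ ⋃ l ∈ A \ {0}, conicSet F a 1 l

/-- A degree 4 maximal arc of Denniston type: the image under a collineation of
`{(0,0,1)} ∪ ⋃_{λ ∈ A \ {0}} F_{α,1,λ}` with `Tr(α) = 1` and `A` an additive
subgroup of order 4. -/
def IsDenniston4 (h : ℕ) (K : Set (Pt F)) : Prop :=
  ∃ a : F, tr F h a = 1 ∧ ∃ A : AddSubgroup F, Nat.card A = 4 ∧
    ∃ g : Pt F → Pt F, IsCollineation F g ∧ g '' dennistonSet F a (A : Set F) = K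

/-- `C` is a nondegenerate conic of `PG(2,q)` with nucleus `n`: the zero set of a
nonzero quadratic form, consisting of exactly `q+1` points no three of which are
collinear, all of whose tangent lines pass through `n`. -/
def IsConicWithNucleus (C : Set (Pt F)) (n : Pt F) : Prop :=
  (∃ a b c d e f : F, ¬(a = 0 ∧ b = 0 ∧ c = 0 ∧ d = 0 ∧ e = 0 ∧ f = 0) ∧
      C = {P | a * P.rep 0 ^ 2 + b * P.rep 1 ^ 2 + c * P.rep 2 ^ 2 +
        d * P.rep 0 * P.rep 1 + e * P.rep 0 * P.rep 2 + f * P.rep 1 * P.rep 2 = 0}) ∧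
    C.ncard = Fintype.card F + 1 ∧
    (∀ L : Set (Pt F), IsLine F L → (C ∩ L).ncard ≤ 2) ∧
    (∀ L : Set (Pt F), IsLine F L → (C ∩ L).ncard = 1 → n ∈ L)

/-- A maximal arc of degree `d` of Mathon type in `PG(2,q)`, `q = 2^h`. -/
def IsMathonType (h : ℕ) (K : Set (Pt F)) (d : ℕ) : Prop :=
  IsMaximalArc F K d ∧
    ∃ g : Pt F → Pt F, IsCollineation F g ∧ ∃ (Λ : Finset F) (a b : F → F),
      IsClosedConicSet F h Λ a b ∧ Λ.card + 1 = d ∧ g '' K = mathonSet F Λ a b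

/-- A maximal arc of degree `d` of Mathon type in `PG(2,q)` with nucleus `n`
(the preimage of `(0,0,1)` under a collineation realizing the Mathon description). -/
def IsMathonWithNucleus (h : ℕ) (K : Set (Pt F)) (d : ℕ) (n : Pt F) : Prop :=
  IsMaximalArc F K d ∧
    ∃ g : Pt F → Pt F, IsCollineation F g ∧ g n = pt001 F ∧
      ∃ (Λ : Finset F) (a b : F → F),
        IsClosedConicSet F h Λ a b ∧ Λ.card + 1 = d ∧ g '' K = mathonSet F Λ a b

/-- A maximal arc of Denniston type: Mathon type where the closed set of conics can
be chosen with `α` and `β` constant. -/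
def IsDennistonType (h : ℕ) (K : Set (Pt F)) : Prop :=
  ∃ g : Pt F → Pt F, IsCollineation F g ∧ ∃ (a b : F) (Λ : Finset F),
    IsClosedConicSet F h Λ (fun _ => a) (fun _ => b) ∧
    g '' K = mathonSet F Λ (fun _ => a) (fun _ => b)

/-- A proper Mathon arc of degree `d`: a Mathon arc that is not of Denniston type. -/
def IsProperMathon (h : ℕ) (K : Set (Pt F)) (d : ℕ) : Prop :=
  IsMathonType F h K d ∧ ¬ IsDennistonType F h K

end MaxArc


lemma aux_pow_mul {F : Type} [Monoid F] (x : F) (k m : ℕ) (h : x ^ 2 ^ k = x) :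
    x ^ 2 ^ (k * m) = x := by
  induction m with
  | zero => simp
  | succ n ih => rw [Nat.mul_succ, pow_add, pow_mul, ih, h]

lemma aux_fix {F : Type} [Field F] [Fintype F] {p : ℕ} (hp : p.Prime)
    (hcard : Fintype.card F = 2 ^ p) {k : ℕ} (hk : ¬ p ∣ k) {x : F}
    (hx : x ^ 2 ^ k = x) : x = 0 ∨ x = 1 := by
  haveI : Fact p.Prime := ⟨hp⟩
  have hku : (k : ZMod p) ≠ 0 := by
    rwa [Ne, ZMod.natCast_eq_zero_iff]
  set m := ((k : ZMod p)⁻¹).val with hm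
  have h1 : ((k * m : ℕ) : ZMod p) = 1 := by
    push_cast
    rw [hm, ZMod.natCast_val, ZMod.cast_id]
    exact mul_inv_cancel₀ hku
  have h2 : (k * m) % p = 1 := by
    have := (ZMod.natCast_eq_natCast_iff (k * m) 1 p).mp (by simpa using h1)
    simpa [Nat.ModEq, Nat.mod_eq_of_lt hp.one_lt] using this
  have h3 : k * m = p * ((k * m) / p) + 1 := by
    conv_lhs => rw [← Nat.div_add_mod (k * m) p]
    rw [h2]
  have hfix1 : x ^ 2 ^ (k * m) = x := aux_pow_mul x k m hx
  have hpfix : x ^ 2 ^ p = x := by rw [← hcard]; exact FiniteField.pow_card x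
  have hfix2 : x ^ 2 ^ (p * ((k * m) / p)) = x := aux_pow_mul x p _ hpfix
  rw [h3, pow_add, pow_mul, pow_one] at hfix1
  rw [hfix2] at hfix1
  have : x * (x - 1) = 0 := by ring_nf; linear_combination hfix1
  rcases mul_eq_zero.mp this with h | h
  · exact Or.inl h
  · exact Or.inr (sub_eq_zero.mp h)

lemma aux_char2 {F : Type} [Field F] [Fintype F] {p : ℕ}
    (hcard : Fintype.card F = 2 ^ p) : CharP F 2 := by
  obtain ⟨q, hq⟩ := CharP.exists F
  obtain ⟨n, hqp, hcard'⟩ := @FiniteField.card F _ _ q hq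
  have hq2 : q = 2 := by
    have hd : q ∣ 2 ^ p := by
      rw [← hcard, hcard']
      exact dvd_pow_self q n.2.ne'
    have := hqp.dvd_of_dvd_pow (n := p) hd
    exact (Nat.prime_dvd_prime_iff_eq hqp Nat.prime_two).mp this
  rwa [hq2] at hq

lemma aux_order3 {F : Type} [Field F] [Fintype F] {p : ℕ} (hp : p.Prime) (hp2 : p ≠ 2)
    (hcard : Fintype.card F = 2 ^ p)
    {w : F} (hw0 : w ≠ 0) (hw1 : w ≠ 1) (h2 : (2 : F) = 0)
    (hsq : w * w = w + 1) : False := by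
  have h3 : w ^ 3 = 1 := by linear_combination w * hsq + hsq + w * h2
  have hmod : 2 ^ p % 3 = 2 := by
    have hodd : Odd p := hp.odd_of_ne_two hp2
    have : ((2 ^ p : ℕ) : ZMod 3) = ((2 : ℕ) : ZMod 3) := by
      push_cast
      have : (2 : ZMod 3) = -1 := by decide
      rw [this, hodd.neg_one_pow]
    have := (ZMod.natCast_eq_natCast_iff _ _ _).mp this
    simpa [Nat.ModEq] using this
  have hsplit : 2 ^ p = 3 * (2 ^ p / 3) + 2 := by
    conv_lhs => rw [← Nat.div_add_mod (2 ^ p) 3]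
    rw [hmod]
  have hpc : w ^ 2 ^ p = w := by rw [← hcard]; exact FiniteField.pow_card w
  rw [hsplit, pow_add, pow_mul, h3, one_pow, one_mul] at hpc
  have hfac : w * (w - 1) = 0 := by ring_nf; linear_combination hpc
  rcases mul_eq_zero.mp hfac with h | h
  · exact hw0 h
  · exact hw1 (sub_eq_zero.mp h)

/-- in `GF(2^p)`, `p` prime, `p ≠ 2,3`, the only map of the form
`x ↦ a·x^(2^l)` (`a ≠ 0`, `0 ≤ l < p`) mapping `A = {0,1,w,w+1}` onto itself is the
identity, i.e. `a = 1` and `l = 0`. -/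
theorem statement8 {F : Type} [Field F] [Fintype F] (p : ℕ)
    (hp : p.Prime) (hp2 : p ≠ 2) (hp3 : p ≠ 3)
    (hcard : Fintype.card F = 2 ^ p)
    (w : F) (hw0 : w ≠ 0) (hw1 : w ≠ 1)
    (a : F) (ha : a ≠ 0) (l : ℕ) (hl : l < p)
    (hmap : (fun x : F => a * x ^ 2 ^ l) '' ({0, 1, w, w + 1} : Set F)
      = ({0, 1, w, w + 1} : Set F)) :
    a = 1 ∧ l = 0 := by
  haveI hchar : CharP F 2 := aux_char2 hcard
  haveI : Fact (Nat.Prime 2) := ⟨Nat.prime_two⟩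
  have h2 : (2 : F) = 0 := by
    have := CharP.cast_eq_zero F 2
    exact_mod_cast this
  have hfrob : ∀ x y : F, (x + y) ^ 2 ^ l = x ^ 2 ^ l + y ^ 2 ^ l := fun x y =>
    add_pow_char_pow x y 2 l
  set u : F := w ^ 2 ^ l with hu
  set u2 : F := u ^ 2 ^ l with hu2
  set u3 : F := u2 ^ 2 ^ l with hu3
  have hu2w : u2 = w ^ 2 ^ (2 * l) := by
    rw [hu2, hu, ← pow_mul, ← pow_add, two_mul]
  have hu3w : u3 = w ^ 2 ^ (3 * l) := by
    rw [hu3, hu2, hu, ← pow_mul, ← pow_mul, ← pow_add, ← pow_add]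
    congr 2
    ring
  have hune : u ≠ 0 := pow_ne_zero _ hw0
  have hws : w + 1 ≠ 0 := fun h => hw1 (by linear_combination h - h2)
  have hu1 : u ≠ 1 := by
    intro h
    have hz : (w + 1) ^ 2 ^ l = 0 := by
      rw [hfrob, one_pow, ← hu, h]; linear_combination h2
    exact hws ((pow_eq_zero_iff (by positivity : (0:ℕ) < 2 ^ l).ne').mp hz)
  have hmem : ∀ x ∈ ({0, 1, w, w + 1} : Set F),
      a * x ^ 2 ^ l ∈ ({0, 1, w, w + 1} : Set F) := by
    intro x hx
    rw [← hmap]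
    exact ⟨x, hx, rfl⟩
  have hfixw : ∀ c : ℕ, c ≠ 0 → ¬ p ∣ c → w ^ 2 ^ (c * l) = w → l = 0 := by
    intro c hc hpc hfix
    by_contra hl0
    have hndvd : ¬ p ∣ c * l := by
      intro hdvd
      rcases (Nat.Prime.dvd_mul hp).mp hdvd with h | h
      · exact hpc h
      · have := Nat.le_of_dvd (Nat.pos_of_ne_zero hl0) h; omega
    rcases aux_fix hp hcard hndvd hfix with h | h
    · exact hw0 h
    · exact hw1 h
  have hp1 : ¬ p ∣ 1 := fun h => hp.ne_one (Nat.dvd_one.mp h)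
  have hpd2 : ¬ p ∣ 2 := fun h => hp2 ((Nat.prime_dvd_prime_iff_eq hp Nat.prime_two).mp h)
  have hpd3 : ¬ p ∣ 3 := fun h => hp3 ((Nat.prime_dvd_prime_iff_eq hp Nat.prime_three).mp h)
  have haA := hmem 1 (by simp)
  simp only [one_pow, mul_one, Set.mem_insert_iff, Set.mem_singleton_iff] at haA
  have hfwA := hmem w (by simp)
  simp only [Set.mem_insert_iff, Set.mem_singleton_iff, ← hu] at hfwA
  rcases haA with h | h | h | h
  · exact absurd h ha
  · -- a = 1
    subst h
    rw [one_mul] at hfwA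
    rcases hfwA with h | h | h | h
    · exact absurd h hune
    · exact absurd h hu1
    · refine ⟨rfl, hfixw 1 one_ne_zero hp1 ?_⟩
      rw [one_mul, ← hu]; exact h
    · exfalso
      have hA : u2 = u + 1 := by
        rw [hu2, h, hfrob, one_pow, ← hu, h]
      have hfix : w ^ 2 ^ (2 * l) = w := by
        rw [← hu2w, hA, h]; linear_combination h2
      have hl0 := hfixw 2 two_ne_zero hpd2 hfix
      rw [hl0, pow_zero, pow_one] at hu
      rw [hu] at h
      exact one_ne_zero (by linear_combination -h : (1:F) = 0)
  · -- a = w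
    rw [h] at hfwA
    rcases hfwA with h' | h' | h' | h'
    · exact absurd h' (mul_ne_zero hw0 hune)
    · -- w * u = 1
      exfalso
      have hA : u * u2 = 1 := by
        have := congrArg (fun x : F => x ^ 2 ^ l) h'
        simpa [mul_pow, one_pow, ← hu, ← hu2] using this
      have hfix : w ^ 2 ^ (2 * l) = w := by
        rw [← hu2w]; linear_combination w * hA - u2 * h'
      have hl0 := hfixw 2 two_ne_zero hpd2 hfix
      rw [hl0, pow_zero, pow_one] at hu
      rw [hu] at h'
      have hfac : (w - 1) * (w + 1) = 0 := by linear_combination h'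
      rcases mul_eq_zero.mp hfac with hc | hc
      · exact hw1 (sub_eq_zero.mp hc)
      · exact hws hc
    · exact absurd (mul_left_cancel₀ hw0 (by rw [h', mul_one])) hu1
    · -- w * u = w + 1
      exfalso
      have hA : u * u2 = u + 1 := by
        have := congrArg (fun x : F => x ^ 2 ^ l) h'
        simpa [mul_pow, hfrob, one_pow, ← hu, ← hu2] using this
      have hB : u2 * u3 = u2 + 1 := by
        have := congrArg (fun x : F => x ^ 2 ^ l) hA
        simpa [mul_pow, hfrob, one_pow, ← hu2, ← hu3] using this
      have k1 : w * u * u2 = 1 := by linear_combination w * hA + h' + w * h2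
      have hfix : w ^ 2 ^ (3 * l) = w := by
        rw [← hu3w]
        linear_combination (w * u) * hB + (1 - u3) * k1 + h' + h2
      have hl0 := hfixw 3 three_ne_zero hpd3 hfix
      rw [hl0, pow_zero, pow_one] at hu
      rw [hu] at h'
      exact aux_order3 hp hp2 hcard hw0 hw1 h2 h'
  · -- a = w + 1
    rw [h] at hfwA
    rcases hfwA with h' | h' | h' | h'
    · exact absurd h' (mul_ne_zero hws hune)
    · -- (w+1) * u = 1
      exfalso
      have hA : (u + 1) * u2 = 1 := by
        have := congrArg (fun x : F => x ^ 2 ^ l) h'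
        simpa [mul_pow, hfrob, one_pow, ← hu, ← hu2] using this
      have hB : (u2 + 1) * u3 = 1 := by
        have := congrArg (fun x : F => x ^ 2 ^ l) hA
        simpa [mul_pow, hfrob, one_pow, ← hu2, ← hu3] using this
      have k1 : (w + 1) * (u + 1) = w := by linear_combination h' + h2
      have k2 : w * u2 = w + 1 := by linear_combination (w + 1) * hA - u2 * k1
      have k3 : w * (u2 + 1) = 1 := by linear_combination k2 + w * h2
      have hfix : w ^ 2 ^ (3 * l) = w := by
        rw [← hu3w]
        linear_combination w * hB - u3 * k3
      have hl0 := hfixw 3 three_ne_zero hpd3 hfix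
      rw [hl0, pow_zero, pow_one] at hu
      rw [hu] at h'
      have hsq : w * w = w + 1 := by linear_combination h' - w * h2
      exact aux_order3 hp hp2 hcard hw0 hw1 h2 hsq
    · -- (w+1) * u = w
      exfalso
      have hA : (u + 1) * u2 = u := by
        have := congrArg (fun x : F => x ^ 2 ^ l) h'
        simpa [mul_pow, hfrob, one_pow, ← hu, ← hu2] using this
      have k1 : (w + 1) * (u + 1) = 1 := by linear_combination h' + w * h2
      have hfix : w ^ 2 ^ (2 * l) = w := by
        rw [← hu2w]
        linear_combination (w + 1) * hA - u2 * k1 + h'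
      have hl0 := hfixw 2 two_ne_zero hpd2 hfix
      rw [hl0, pow_zero, pow_one] at hu
      rw [hu] at h'
      have : w * w = 0 := by linear_combination h'
      exact hw0 (mul_self_eq_zero.mp this)
    · exact absurd (mul_left_cancel₀ hws (by rw [h', mul_one])) hu1
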